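/- arXiv:2501.08318 — 6 statements merged into one kernel-verified Lean document; each statement's English description precedes it below -/
import Mathlib

section
/- Let L be a finite lattice that is the adjunct L = K ]ᵇₐ M of a sublattice K with a nonempty chain M, with respect to a pair a < b in K with b not covering a in K. Then Dim(L) ≤ Dim(K) + 1. -/
/-- A family of `t` relations is a *realizer* of the relation `le`:
each member is a linear order (on the whole ground set) and their
intersection is exactly `le`.  (In particular each member extends `le`.) -/
def IsRealizer {α : Type*} (le : α → α → Prop) {t : ℕ}
    (R : Fin t → α → α → Prop) : Prop :=
  (∀ i, IsLinearOrder α (R i)) ∧ ∀ x y, le x y ↔ ∀ i, R i x y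

/-- The Dushnik–Miller order dimension of the relation `le`: the least
positive number `t` of linear extensions whose intersection is `le`. -/
noncomputable def orderDim {α : Type*} (le : α → α → Prop) : ℕ :=
  sInf {t | 0 < t ∧ ∃ R : Fin t → α → α → Prop, IsRealizer le R}

/-- An element of a poset is doubly irreducible if it has at most one lower
cover and at most one upper cover. -/
def DoublyIrreducible {α : Type*} [PartialOrder α] (z : α) : Prop :=
  {w | w ⋖ z}.Subsingleton ∧ {w | z ⋖ w}.Subsingleton

/-- An element is reducible if it is not doubly irreducible. -/
def Reducible {α : Type*} [PartialOrder α] (z : α) : Prop :=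
  ¬ DoublyIrreducible z

/-- A lattice is an RC-lattice if any two of its reducible elements are
comparable. -/
def IsRCLattice (α : Type*) [Lattice α] : Prop :=
  ∀ x y : α, Reducible x → Reducible y → (x ≤ y ∨ y ≤ x)


/-- The ground set of the complete fundamental basic block `L_r`:
the chain `A₁ ≺ x₁ ≺ A₂ ≺ ⋯ ≺ x_{r-1} ≺ A_r` (of length `2r-1`,
`A_{i+1}` sitting at position `2i`, `x_{i+1}` at position `2i+1`),
together with the doubly irreducible elements `c_{ij}` for `1 ≤ i < j ≤ r`. -/
def Lr (r : ℕ) : Type :=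
  Fin (2 * r - 1) ⊕ {p : Fin r × Fin r // (p.1 : ℕ) < (p.2 : ℕ)}

namespace Lr

/-- The order of `L_r`: on the chain it is the usual order; `z ≤ c_{ij}` iff
`z ≤ A_i`; `c_{ij} ≤ z` iff `A_j ≤ z`; `c_{ij} ≤ c_{kl}` iff `(i,j) = (k,l)`
or `j ≤ k`. -/
def le {r : ℕ} (x y : Lr r) : Prop :=
  match x, y with
  | Sum.inl k, Sum.inl k' => (k : ℕ) ≤ (k' : ℕ)
  | Sum.inl k, Sum.inr c => (k : ℕ) ≤ 2 * (c.1.1 : ℕ)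
  | Sum.inr c, Sum.inl k => 2 * (c.1.2 : ℕ) ≤ (k : ℕ)
  | Sum.inr c, Sum.inr c' =>
      ((c.1.1 : ℕ) = (c'.1.1 : ℕ) ∧ (c.1.2 : ℕ) = (c'.1.2 : ℕ)) ∨
        (c.1.2 : ℕ) ≤ (c'.1.1 : ℕ)

instance (r : ℕ) : PartialOrder (Lr r) where
  le := le
  le_refl x := by rcases x with k | ⟨p, hp⟩ <;> simp [le]
  le_trans x y z hxy hyz := by
    rcases x with k | ⟨p, hp⟩ <;> rcases y with k' | ⟨q, hq⟩ <;>
      rcases z with k'' | ⟨t, ht⟩ <;>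
      simp only [le] at hxy hyz ⊢ <;> omega
  le_antisymm x y hxy hyx := by
    rcases x with k | ⟨p, hp⟩ <;> rcases y with k' | ⟨q, hq⟩ <;>
      simp only [le] at hxy hyx
    · exact congrArg Sum.inl (Fin.ext (by omega))
    · omega
    · omega
    · have h1 : (p.1 : ℕ) = (q.1 : ℕ) := by omega
      have h2 : (p.2 : ℕ) = (q.2 : ℕ) := by omega
      exact congrArg Sum.inr (Subtype.ext (Prod.ext (Fin.ext h1) (Fin.ext h2)))

/-- The reducible element `A_{i+1}` of `L_r` (`i` is 0-based). -/
def A {r : ℕ} (i : Fin r) : Lr r :=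
  Sum.inl ⟨2 * (i : ℕ), by have := i.2; omega⟩

/-- The doubly irreducible chain element `x_{i+1}` of `L_r` (`i` is 0-based). -/
def X {r : ℕ} (i : Fin (r - 1)) : Lr r :=
  Sum.inl ⟨2 * (i : ℕ) + 1, by have := i.2; omega⟩

/-- The doubly irreducible element `c_{(i+1)(j+1)}` of `L_r`
(`i`, `j` are 0-based). -/
def c {r : ℕ} (i j : Fin r) (h : (i : ℕ) < (j : ℕ)) : Lr r :=
  Sum.inr ⟨(i, j), h⟩

end Lr


/-- The adjunct order `L₁ ]ᵇₐ L₂` on the disjoint union of two ordered sets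
(with respect to the pair `a < b` of the first one):
`x ≤ y` iff both lie in `L₁` and `x ≤ y` there, or both lie in `L₂` and
`x ≤ y` there, or `x ∈ L₁`, `y ∈ L₂` and `x ≤ a`, or `x ∈ L₂`, `y ∈ L₁`
and `b ≤ y`. -/
def adjunctLE {α β : Type*} [LE α] [LE β] (a b : α) :
    α ⊕ β → α ⊕ β → Prop
  | Sum.inl x, Sum.inl y => x ≤ y
  | Sum.inl x, Sum.inr _ => x ≤ a
  | Sum.inr _, Sum.inl y => b ≤ y
  | Sum.inr x, Sum.inr y => x ≤ y

/-- A subset of a lattice is a sublattice if it is closed under `⊔` and `⊓`. -/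
def IsSublatticeSet {α : Type*} [Lattice α] (S : Set α) : Prop :=
  ∀ ⦃x⦄, x ∈ S → ∀ ⦃y⦄, y ∈ S → x ⊔ y ∈ S ∧ x ⊓ y ∈ S

/-- A finite lattice on `n` elements is dismantlable if there is a chain
`L₁ ⊆ L₂ ⊆ ⋯ ⊆ Lₙ` of sublattices with `|Lᵢ| = i` exhausting the lattice. -/
def Dismantlable (α : Type*) [Lattice α] : Prop :=
  ∃ S : Fin (Nat.card α) → Set α,
    (∀ i, IsSublatticeSet (S i)) ∧
    (∀ i j, i ≤ j → S i ⊆ S j) ∧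
    (∀ i, Nat.card (S i) = (i : ℕ) + 1) ∧
    (∀ x : α, ∃ i, x ∈ S i)

/-- The cover graph of a poset: `x` and `y` are adjacent iff one covers the
other. -/
def coverGraph (α : Type*) [PartialOrder α] : SimpleGraph α where
  Adj x y := x ⋖ y ∨ y ⋖ x
  symm := ⟨fun x y h => h.symm⟩
  loopless := ⟨fun x h => by rcases h with h | h <;> exact lt_irrefl x h.lt⟩

/-- The nullity of a poset: (number of covering pairs) − (number of elements)
+ (number of connected components of the cover graph). -/
noncomputable def nullity (α : Type*) [PartialOrder α] : ℤ :=
  (Nat.card {p : α × α // p.1 ⋖ p.2} : ℤ) - (Nat.card α : ℤ) +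
    (Nat.card (coverGraph α).ConnectedComponent : ℤ)

/-- `(a, b)` is an adjunct pair of the lattice `α`: `a < b` and `α` can be
partitioned into nonempty sublattices `K` and `M` with `a, b ∈ K`, `b` not
covering `a` within `K`, such that for `x ∈ K`, `y ∈ M`: `x ≤ y ↔ x ≤ a`
and `y ≤ x ↔ b ≤ x`. -/
def IsAdjunctPair {α : Type*} [Lattice α] (a b : α) : Prop :=
  a < b ∧ ∃ K M : Set α, K.Nonempty ∧ M.Nonempty ∧ Disjoint K M ∧
    K ∪ M = Set.univ ∧ IsSublatticeSet K ∧ IsSublatticeSet M ∧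
    a ∈ K ∧ b ∈ K ∧ (∃ z ∈ K, a < z ∧ z < b) ∧
    ∀ x ∈ K, ∀ y ∈ M, (x ≤ y ↔ x ≤ a) ∧ (y ≤ x ↔ b ≤ x)

/-- `s` is the least upper bound of `x` and `y` with respect to the
relation `le`. -/
def IsLUBRel {γ : Type*} (le : γ → γ → Prop) (x y s : γ) : Prop :=
  le x s ∧ le y s ∧ ∀ z, le x z → le y z → le s z

/-- `s` is the greatest lower bound of `x` and `y` with respect to the
relation `le`. -/
def IsGLBRel {γ : Type*} (le : γ → γ → Prop) (x y s : γ) : Prop :=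
  le s x ∧ le s y ∧ ∀ z, le z x → le z y → le z s

/-- `y` covers `x` with respect to the relation `le`. -/
def RelCovBy {γ : Type*} (le : γ → γ → Prop) (x y : γ) : Prop :=
  le x y ∧ x ≠ y ∧ ∀ z, le x z → le z y → z = x ∨ z = y

section AuxRealizer

open Classical

/-- Every finite nonempty partial order has a realizer. -/
lemma exists_realizer_aux (α : Type*) [PartialOrder α] [Finite α] [Nonempty α] :
    ∃ t : ℕ, 0 < t ∧ ∃ R : Fin t → α → α → Prop,
      IsRealizer ((· ≤ ·) : α → α → Prop) R := by
  have key : ∀ p : α × α, ∃ s : α → α → Prop, IsLinearOrder α s ∧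
      (∀ u v : α, u ≤ v → s u v) ∧ (¬ p.1 ≤ p.2 → ¬ s p.1 p.2) := by
    rintro ⟨x, y⟩
    by_cases hxy : x ≤ y
    · obtain ⟨s, hs, hext⟩ := extend_partialOrder ((· ≤ ·) : α → α → Prop)
      exact ⟨s, hs, fun u v h => hext u v h, fun h => absurd hxy h⟩
    · set r : α → α → Prop := fun u v => u ≤ v ∨ (u ≤ y ∧ x ≤ v) with hr
      haveI : IsPartialOrder α r := by
        refine { refl := ?_, trans := ?_, antisymm := ?_ }
        · intro u; exact Or.inl le_rfl
        · rintro u v w (h1 | ⟨h1, h1'⟩) (h2 | ⟨h2, h2'⟩)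
          · exact Or.inl (h1.trans h2)
          · exact Or.inr ⟨h1.trans h2, h2'⟩
          · exact Or.inr ⟨h1, h1'.trans h2⟩
          · exact Or.inr ⟨h1, h2'⟩
        · rintro u v (h1 | ⟨h1, h1'⟩) (h2 | ⟨h2, h2'⟩)
          · exact le_antisymm h1 h2
          · exact absurd ((h2'.trans h1).trans h2) hxy
          · exact absurd ((h1'.trans h2).trans h1) hxy
          · exact absurd (h1'.trans h2) hxy
      obtain ⟨s, hs, hrs⟩ := extend_partialOrder r
      refine ⟨s, hs, fun u v h => hrs _ _ (Or.inl h), fun _ hsxy => ?_⟩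
      have hsyx : s y x := hrs _ _ (Or.inr ⟨le_rfl, le_rfl⟩)
      have : x = y := hs.toIsPartialOrder.toAntisymm.antisymm _ _ hsxy hsyx
      exact hxy (this ▸ le_rfl)
  choose E hElin hEext hEneg using key
  refine ⟨Nat.card (α × α), Nat.card_pos, fun i => E ((Finite.equivFin (α × α)).symm i),
    fun i => hElin _, fun x y => ⟨fun h i => hEext _ _ _ h, fun h => ?_⟩⟩
  by_contra hxy
  have := h ((Finite.equivFin (α × α)) (x, y))
  simp only [Equiv.symm_apply_apply] at this
  exact hEneg (x, y) hxy this

/-- Insert the chain `β` just above `a`. -/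
def lowExt {α β : Type*} [LE β] (P : α → α → Prop) (a : α) : α ⊕ β → α ⊕ β → Prop
  | Sum.inl x, Sum.inl y => P x y
  | Sum.inl x, Sum.inr _ => P x a
  | Sum.inr _, Sum.inl y => ¬ P y a
  | Sum.inr x, Sum.inr y => x ≤ y

/-- Insert the chain `β` just below `b`. -/
def highExt {α β : Type*} [LE β] (P : α → α → Prop) (b : α) : α ⊕ β → α ⊕ β → Prop
  | Sum.inl x, Sum.inl y => P x y
  | Sum.inl x, Sum.inr _ => ¬ P b x
  | Sum.inr _, Sum.inl y => P b y
  | Sum.inr x, Sum.inr y => x ≤ y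

lemma lowExt_isLinearOrder {α β : Type*} [LinearOrder β] {P : α → α → Prop}
    (hP : IsLinearOrder α P) (a : α) : IsLinearOrder (α ⊕ β) (lowExt P a) := by
  haveI := hP
  have htr : ∀ {u v w : α}, P u v → P v w → P u w := fun h1 h2 => Trans.trans h1 h2
  have htot : ∀ u v : α, P u v ∨ P v u := Std.Total.total
  refine { refl := ?_, trans := ?_, antisymm := ?_, total := ?_ }
  · rintro (x | m) <;> simp [lowExt, Std.Refl.refl (r := P)]
  · rintro (x | m) (y | m') (z | m'') h1 h2 <;> simp only [lowExt] at h1 h2 ⊢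
    · exact htr h1 h2
    · exact htr h1 h2
    · rcases htot x z with h | h
      · exact h
      · exact absurd (htr h h1) h2
    · exact h1
    · intro hza; exact h1 (htr h2 hza)
    · exact absurd h2 h1
    · exact h2
    · exact le_trans h1 h2
  · rintro (x | m) (y | m') h1 h2 <;> simp only [lowExt] at h1 h2
    · exact congrArg Sum.inl (Std.Antisymm.antisymm _ _ h1 h2)
    · exact absurd h1 h2
    · exact absurd h2 h1
    · exact congrArg Sum.inr (le_antisymm h1 h2)
  · rintro (x | m) (y | m') <;> simp only [lowExt]
    · exact htot x y
    · exact (Classical.em (P x a)).imp id id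
    · exact (Classical.em (P y a)).symm.imp id id
    · exact le_total m m'

lemma highExt_isLinearOrder {α β : Type*} [LinearOrder β] {P : α → α → Prop}
    (hP : IsLinearOrder α P) (b : α) : IsLinearOrder (α ⊕ β) (highExt P b) := by
  haveI := hP
  have htr : ∀ {u v w : α}, P u v → P v w → P u w := fun h1 h2 => Trans.trans h1 h2
  have htot : ∀ u v : α, P u v ∨ P v u := Std.Total.total
  refine { refl := ?_, trans := ?_, antisymm := ?_, total := ?_ }
  · rintro (x | m) <;> simp [highExt, Std.Refl.refl (r := P)]
  · rintro (x | m) (y | m') (z | m'') h1 h2 <;> simp only [highExt] at h1 h2 ⊢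
    · exact htr h1 h2
    · intro hbx; exact h2 (htr hbx h1)
    · rcases htot x z with h | h
      · exact h
      · exact absurd (htr h2 h) h1
    · exact h1
    · exact htr h1 h2
    · exact absurd h1 h2
    · exact h2
    · exact le_trans h1 h2
  · rintro (x | m) (y | m') h1 h2 <;> simp only [highExt] at h1 h2
    · exact congrArg Sum.inl (Std.Antisymm.antisymm _ _ h1 h2)
    · exact absurd h2 h1
    · exact absurd h1 h2
    · exact congrArg Sum.inr (le_antisymm h1 h2)
  · rintro (x | m) (y | m') <;> simp only [highExt]
    · exact htot x y
    · exact (Classical.em (P b x)).symm.imp id id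
    · exact (Classical.em (P b y)).imp id id
    · exact le_total m m'

end AuxRealizer

/-- if `L = K ]ᵇₐ M` where `M` is a nonempty chain then
`Dim L ≤ Dim K + 1`. -/
theorem dim_adjunct_chain_le_succ {α : Type*} [Lattice α] [Finite α]
    {β : Type*} [LinearOrder β] [Finite β] [Nonempty β]
    {a b : α} (hab : a < b) (hcov : ¬ a ⋖ b) :
    orderDim (adjunctLE (α := α) (β := β) a b) ≤
      orderDim ((· ≤ ·) : α → α → Prop) + 1 := by
  classical
  haveI : Nonempty α := ⟨a⟩
  obtain ⟨t0, ht0, R0, hR0⟩ := exists_realizer_aux α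
  have hne : {t | 0 < t ∧ ∃ R : Fin t → α → α → Prop,
      IsRealizer ((· ≤ ·) : α → α → Prop) R}.Nonempty := ⟨t0, ht0, R0, hR0⟩
  set d := orderDim ((· ≤ ·) : α → α → Prop) with hdef
  obtain ⟨hd, R, hRlin, hRint⟩ :
      d ∈ {t | 0 < t ∧ ∃ R : Fin t → α → α → Prop,
        IsRealizer ((· ≤ ·) : α → α → Prop) R} := Nat.sInf_mem hne
  -- each member of the realizer extends `≤`
  have hRext : ∀ (i : Fin d) (x y : α), x ≤ y → R i x y :=
    fun i x y h => (hRint x y).mp h i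
  -- a linear extension of `≤` whose down-set of `a` is exactly `{x | x ≤ a}`
  obtain ⟨Q0, hQ0lin, hQ0ext⟩ := extend_partialOrder ((· ≤ ·) : α → α → Prop)
  haveI := hQ0lin
  set Q : α → α → Prop := fun x y => (x ≤ a ∧ ¬ y ≤ a) ∨ ((x ≤ a ↔ y ≤ a) ∧ Q0 x y)
    with hQdef
  have hQlin : IsLinearOrder α Q := by
    refine { refl := ?_, trans := ?_, antisymm := ?_, total := ?_ }
    · intro x; exact Or.inr ⟨Iff.rfl, Std.Refl.refl x⟩
    · rintro x y z (⟨h1, h1'⟩ | ⟨h1, h1'⟩) (⟨h2, h2'⟩ | ⟨h2, h2'⟩)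
      · exact absurd h2 h1'
      · exact Or.inl ⟨h1, fun hz => h1' (h2.mpr hz)⟩
      · exact Or.inl ⟨h1.mpr h2, h2'⟩
      · exact Or.inr ⟨h1.trans h2, Trans.trans h1' h2'⟩
    · rintro x y (⟨h1, h1'⟩ | ⟨h1, h1'⟩) (⟨h2, h2'⟩ | ⟨h2, h2'⟩)
      · exact absurd h2 h1'
      · exact absurd (h2.mpr h1) h1'
      · exact absurd (h1.mpr h2) h2'
      · exact Std.Antisymm.antisymm _ _ h1' h2'
    · intro x y
      by_cases hx : x ≤ a <;> by_cases hy : y ≤ a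
      · rcases Std.Total.total (r := Q0) x y with h | h
        · exact Or.inl (Or.inr ⟨by simp [hx, hy], h⟩)
        · exact Or.inr (Or.inr ⟨by simp [hx, hy], h⟩)
      · exact Or.inl (Or.inl ⟨hx, hy⟩)
      · exact Or.inr (Or.inl ⟨hy, hx⟩)
      · rcases Std.Total.total (r := Q0) x y with h | h
        · exact Or.inl (Or.inr ⟨by simp [hx, hy], h⟩)
        · exact Or.inr (Or.inr ⟨by simp [hx, hy], h⟩)
  have hQext : ∀ x y : α, x ≤ y → Q x y := by
    intro x y h
    by_cases hy : y ≤ a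
    · exact Or.inr ⟨by simp [h.trans hy, hy], hQ0ext x y h⟩
    · by_cases hx : x ≤ a
      · exact Or.inl ⟨hx, hy⟩
      · exact Or.inr ⟨by simp [hx, hy], hQ0ext x y h⟩
  have hQa : ∀ x : α, Q x a ↔ x ≤ a := by
    intro x
    constructor
    · rintro (⟨h, h'⟩ | ⟨h, h'⟩)
      · exact h
      · exact h.mpr le_rfl
    · exact fun h => hQext x a h
  -- the realizer of the adjunct
  set R' : Fin (d + 1) → (α ⊕ β) → (α ⊕ β) → Prop := fun i =>
    if h : (i : ℕ) < d then highExt (R ⟨i, h⟩) b else lowExt Q a with hR'def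
  have hR'lt : ∀ (j : Fin d), R' ⟨j, j.2.trans (Nat.lt_succ_self d)⟩ = highExt (R j) b := by
    intro j
    simp only [hR'def, dif_pos j.2]
  have hR'last : R' (Fin.last d) = lowExt Q a := by
    simp only [hR'def, Fin.last]
    rw [dif_neg (lt_irrefl d)]
  apply Nat.sInf_le
  refine ⟨Nat.succ_pos d, R', ?_, ?_⟩
  · intro i
    simp only [hR'def]
    split
    · exact highExt_isLinearOrder (hRlin _) b
    · exact lowExt_isLinearOrder hQlin a
  · rintro (x | m) (y | m')
    · -- inl / inl
      simp only [adjunctLE]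
      constructor
      · intro h i
        simp only [hR'def]
        split
        · exact hRext _ _ _ h
        · exact hQext _ _ h
      · intro h
        refine (hRint x y).mpr fun j => ?_
        have := h ⟨j, j.2.trans (Nat.lt_succ_self d)⟩
        rw [hR'lt j] at this
        exact this
    · -- inl / inr : x ≤ a
      simp only [adjunctLE]
      constructor
      · intro h i
        simp only [hR'def]
        split
        · -- highExt: ¬ R _ b x
          rename_i hi
          intro hbx
          haveI := hRlin ⟨(i : ℕ), hi⟩
          have h1 : R ⟨i, hi⟩ b a :=
            IsTrans.trans (r := R ⟨i, hi⟩) _ _ _ hbx (hRext ⟨i, hi⟩ x a h)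
          have h2 : R ⟨i, hi⟩ a b := hRext _ _ _ hab.le
          exact hab.ne (Std.Antisymm.antisymm _ _ h2 h1)
        · exact (hQa x).mpr h
      · intro h
        have := h (Fin.last d)
        rw [hR'last] at this
        exact (hQa x).mp this
    · -- inr / inl : b ≤ y
      simp only [adjunctLE]
      constructor
      · intro h i
        simp only [hR'def]
        split
        · exact hRext _ _ _ h
        · intro hya
          exact absurd (h.trans ((hQa y).mp hya)) hab.not_ge
      · intro h
        refine (hRint b y).mpr fun j => ?_
        have := h ⟨j, j.2.trans (Nat.lt_succ_self d)⟩
        rw [hR'lt j] at this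
        exact this
    · -- inr / inr
      simp only [adjunctLE]
      constructor
      · intro h i
        simp only [hR'def]
        split
        · exact h
        · exact h
      · intro h
        have := h (Fin.last d)
        rw [hR'last] at this
        exact this
end

section
/- For every integer r ≥ 2, the nullity of the complete fundamental basic block L_r equals the binomial coefficient C(r, 2) = r(r−1)/2. -/
namespace LrAux

attribute [local instance 2000] Preorder.toLE Preorder.toLT

/-- The index set of the `c_{ij}` elements. -/
abbrev C (r : ℕ) := {p : Fin r × Fin r // (p.1 : ℕ) < (p.2 : ℕ)}

variable {r : ℕ}

lemma le_iff (x y : Lr r) : x ≤ y ↔ Lr.le x y := Iff.rfl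

lemma lt_iff (x y : Lr r) : x < y ↔ (Lr.le x y ∧ ¬ Lr.le y x) :=
  lt_iff_le_not_ge

lemma cov_chain (k : ℕ) (h : k + 1 < 2 * r - 1) :
    @CovBy (Lr r) _ (Sum.inl ⟨k, by omega⟩) (Sum.inl ⟨k + 1, h⟩) := by
  constructor
  · refine (lt_iff _ _).2 ?_; simp [Lr.le]
  · intro z hz1 hz2
    replace hz1 := (lt_iff _ _).1 hz1; replace hz2 := (lt_iff _ _).1 hz2
    rcases z with m | c
    · simp only [Lr.le] at hz1 hz2; omega
    · have hc := c.2
      simp only [Lr.le] at hz1 hz2; omega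

lemma cov_left (c : C r) (h : 2 * (c.1.1 : ℕ) < 2 * r - 1) :
    @CovBy (Lr r) _ (Sum.inl ⟨2 * (c.1.1 : ℕ), h⟩) (Sum.inr c) := by
  have hc := c.2
  constructor
  · refine (lt_iff _ _).2 ?_; simp only [Lr.le]; omega
  · intro z hz1 hz2
    replace hz1 := (lt_iff _ _).1 hz1; replace hz2 := (lt_iff _ _).1 hz2
    rcases z with m | d
    · simp only [Lr.le] at hz1 hz2; omega
    · have hd := d.2
      simp only [Lr.le] at hz1 hz2; omega

lemma cov_right (c : C r) (h : 2 * (c.1.2 : ℕ) < 2 * r - 1) :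
    @CovBy (Lr r) _ (Sum.inr c) (Sum.inl ⟨2 * (c.1.2 : ℕ), h⟩) := by
  have hc := c.2
  constructor
  · refine (lt_iff _ _).2 ?_; simp only [Lr.le]; omega
  · intro z hz1 hz2
    replace hz1 := (lt_iff _ _).1 hz1; replace hz2 := (lt_iff _ _).1 hz2
    rcases z with m | d
    · simp only [Lr.le] at hz1 hz2; omega
    · have hd := d.2
      simp only [Lr.le] at hz1 hz2; omega

lemma cov_cases {x y : Lr r} (h : x ⋖ y) :
    (∃ k k' : Fin (2 * r - 1), x = Sum.inl k ∧ y = Sum.inl k' ∧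
        (k' : ℕ) = (k : ℕ) + 1) ∨
    (∃ (c : C r) (k : Fin (2 * r - 1)), x = Sum.inl k ∧ y = Sum.inr c ∧
        (k : ℕ) = 2 * (c.1.1 : ℕ)) ∨
    (∃ (c : C r) (k : Fin (2 * r - 1)), x = Sum.inr c ∧ y = Sum.inl k ∧
        (k : ℕ) = 2 * (c.1.2 : ℕ)) := by
  obtain ⟨hlt, hcov⟩ := h
  rw [lt_iff] at hlt
  rcases x with k | c <;> rcases y with k' | c'
  · refine Or.inl ⟨k, k', rfl, rfl, ?_⟩
    simp only [Lr.le] at hlt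
    by_contra hne
    have hk1 : (k : ℕ) + 1 < (k' : ℕ) := by omega
    have hb : (k : ℕ) + 1 < 2 * r - 1 := lt_trans hk1 k'.isLt
    refine hcov (c := Sum.inl ⟨(k : ℕ) + 1, hb⟩) ?_ ?_ <;>
      · refine (lt_iff _ _).2 ?_; simp only [Lr.le]; omega
  · refine Or.inr (Or.inl ⟨c', k, rfl, rfl, ?_⟩)
    have hc := c'.2
    have hb2 := c'.1.2.isLt
    simp only [Lr.le] at hlt
    by_contra hne
    have hlt2 : (k : ℕ) < 2 * (c'.1.1 : ℕ) := by omega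
    have hb : 2 * (c'.1.1 : ℕ) < 2 * r - 1 := by omega
    refine hcov (c := Sum.inl ⟨2 * (c'.1.1 : ℕ), hb⟩) ?_ ?_ <;>
      · refine (lt_iff _ _).2 ?_; simp only [Lr.le]; omega
  · refine Or.inr (Or.inr ⟨c, k', rfl, rfl, ?_⟩)
    have hc := c.2
    simp only [Lr.le] at hlt
    by_contra hne
    have hlt2 : 2 * (c.1.2 : ℕ) < (k' : ℕ) := by omega
    have hb : 2 * (c.1.2 : ℕ) < 2 * r - 1 := lt_trans hlt2 k'.isLt
    refine hcov (c := Sum.inl ⟨2 * (c.1.2 : ℕ), hb⟩) ?_ ?_ <;>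
      · refine (lt_iff _ _).2 ?_; simp only [Lr.le]; omega
  · exfalso
    have hc := c.2
    have hc' := c'.2
    have hb2 := c.1.2.isLt
    simp only [Lr.le] at hlt
    have hle : (c.1.2 : ℕ) ≤ (c'.1.1 : ℕ) := by omega
    have hb : 2 * (c.1.2 : ℕ) < 2 * r - 1 := by
      have := c'.1.2.isLt; omega
    refine hcov (c := Sum.inl ⟨2 * (c.1.2 : ℕ), hb⟩) ?_ ?_ <;>
      · refine (lt_iff _ _).2 ?_; simp only [Lr.le]; omega

/-- The covering pairs of `L_r`, enumerated. -/
noncomputable def covEquiv (r : ℕ) :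
    (Fin (2 * r - 2) ⊕ (C r ⊕ C r)) ≃ {p : Lr r × Lr r // p.1 ⋖ p.2} := by
  refine Equiv.ofBijective (fun a => ?_) ⟨?_, ?_⟩
  · rcases a with k | (c | c)
    · exact ⟨(Sum.inl ⟨(k : ℕ), by have := k.isLt; omega⟩,
        Sum.inl ⟨(k : ℕ) + 1, by have := k.isLt; omega⟩),
        cov_chain _ _⟩
    · exact ⟨(Sum.inl ⟨2 * (c.1.1 : ℕ), by
          have := c.2; have := c.1.2.isLt; omega⟩, Sum.inr c),
        cov_left _ _⟩
    · exact ⟨(Sum.inr c, Sum.inl ⟨2 * (c.1.2 : ℕ), by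
          have := c.1.2.isLt; have := c.2; omega⟩),
        cov_right _ _⟩
  · intro a b hab
    have h1 := congrArg (fun p => p.val.1) hab
    have h2 := congrArg (fun p => p.val.2) hab
    rcases a with k | (c | c) <;> rcases b with k' | (c' | c')
    · have h1' : (Sum.inl (⟨(k : ℕ), by have := k.isLt; omega⟩ :
          Fin (2 * r - 1)) : Lr r) =
          Sum.inl ⟨(k' : ℕ), by have := k'.isLt; omega⟩ := h1
      have h4 := congrArg Fin.val (Sum.inl.inj h1')
      exact congrArg Sum.inl (Fin.ext h4)
    · exact (Sum.inl_ne_inr h2).elim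
    · exact (Sum.inl_ne_inr h1).elim
    · exact (Sum.inr_ne_inl h2).elim
    · exact congrArg (Sum.inr ∘ Sum.inl) (Sum.inr.inj h2)
    · exact (Sum.inl_ne_inr h1).elim
    · exact (Sum.inr_ne_inl h1).elim
    · exact (Sum.inr_ne_inl h1).elim
    · exact congrArg (Sum.inr ∘ Sum.inr) (Sum.inr.inj h1)
  · rintro ⟨⟨x, y⟩, hxy⟩
    rcases cov_cases hxy with ⟨k, k', hx, hy, hk⟩ | ⟨c, k, hx, hy, hk⟩ |
      ⟨c, k, hx, hy, hk⟩
    · subst hx; subst hy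
      exact ⟨Sum.inl ⟨(k : ℕ), by have := k'.isLt; omega⟩,
        Subtype.ext (Prod.ext (congrArg Sum.inl (Fin.ext rfl))
          (congrArg Sum.inl (Fin.ext hk.symm)))⟩
    · subst hx; subst hy
      exact ⟨Sum.inr (Sum.inl c),
        Subtype.ext (Prod.ext (congrArg Sum.inl (Fin.ext hk.symm)) rfl)⟩
    · subst hx; subst hy
      exact ⟨Sum.inr (Sum.inr c),
        Subtype.ext (Prod.ext rfl (congrArg Sum.inl (Fin.ext hk.symm)))⟩

lemma card_C (r : ℕ) : Nat.card (C r) = r.choose 2 := by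
  have e : C r ≃ Σ j : Fin r, Fin (j : ℕ) :=
    { toFun := fun c => ⟨c.1.2, ⟨(c.1.1 : ℕ), c.2⟩⟩
      invFun := fun s => ⟨(⟨(s.2 : ℕ), lt_trans s.2.isLt s.1.isLt⟩, s.1),
        s.2.isLt⟩
      left_inv := fun c => by
        apply Subtype.ext
        exact Prod.ext (Fin.ext rfl) rfl
      right_inv := fun s => rfl }
  rw [Nat.card_congr e, Nat.card_eq_fintype_card, Fintype.card_sigma]
  simp only [Fintype.card_fin]
  rw [Fin.sum_univ_eq_sum_range (fun i => i), Finset.sum_range_id,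
    Nat.choose_two_right]

lemma reach_aux (hr : 2 ≤ r) :
    ∀ (n : ℕ) (h : n < 2 * r - 1),
      (coverGraph (Lr r)).Reachable (Sum.inl ⟨n, h⟩)
        (Sum.inl ⟨0, by omega⟩) := by
  intro n
  induction n with
  | zero => intro h; rfl
  | succ m ih =>
    intro h
    have hadj : (coverGraph (Lr r)).Adj (Sum.inl ⟨m, by omega⟩)
        (Sum.inl ⟨m + 1, h⟩) := Or.inl (cov_chain m h)
    exact (hadj.symm.reachable).trans (ih (by omega))

lemma reach_zero (hr : 2 ≤ r) (x : Lr r) :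
    (coverGraph (Lr r)).Reachable x (Sum.inl ⟨0, by omega⟩) := by
  rcases x with k | c
  · have := reach_aux hr (k : ℕ) k.isLt
    simpa using this
  · have hb : 2 * (c.1.1 : ℕ) < 2 * r - 1 := by
      have := c.2; have := c.1.2.isLt; omega
    have hadj : (coverGraph (Lr r)).Adj (Sum.inl ⟨2 * (c.1.1 : ℕ), hb⟩)
        (Sum.inr c) := Or.inl (cov_left c hb)
    exact hadj.symm.reachable.trans (reach_aux hr _ hb)

lemma card_components (hr : 2 ≤ r) :
    Nat.card (coverGraph (Lr r)).ConnectedComponent = 1 := by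
  rw [Nat.card_eq_one_iff_unique]
  constructor
  · constructor
    intro a b
    induction a using SimpleGraph.ConnectedComponent.ind with
    | _ u =>
      induction b using SimpleGraph.ConnectedComponent.ind with
      | _ v =>
        exact SimpleGraph.ConnectedComponent.sound
          ((reach_zero hr u).trans (reach_zero hr v).symm)
  · exact ⟨(coverGraph (Lr r)).connectedComponentMk
      (Sum.inl ⟨0, by omega⟩)⟩

end LrAux

/-- for `r ≥ 2`, the nullity of the complete fundamental basic
block `L_r` equals `C(r, 2) = r (r - 1) / 2`. -/
theorem nullity_Lr (r : ℕ) (hr : 2 ≤ r) :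
    nullity (Lr r) = (r.choose 2 : ℤ) ∧ r.choose 2 = r * (r - 1) / 2 := by
  refine ⟨?_, Nat.choose_two_right r⟩
  have hcov : Nat.card {p : Lr r × Lr r // p.1 ⋖ p.2} =
      (2 * r - 2) + (r.choose 2 + r.choose 2) := by
    rw [← Nat.card_congr (LrAux.covEquiv r), Nat.card_sum, Nat.card_sum,
      Nat.card_eq_fintype_card, Fintype.card_fin, LrAux.card_C]
  have hn : Nat.card (Lr r) = (2 * r - 1) + r.choose 2 := by
    have : Nat.card (Lr r) = Nat.card (Fin (2 * r - 1) ⊕ LrAux.C r) := rfl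
    rw [this, Nat.card_sum, Nat.card_eq_fintype_card, Fintype.card_fin,
      LrAux.card_C]
  have hc := LrAux.card_components hr
  unfold nullity
  rw [hcov, hn, hc]
  push_cast
  omega
end

section
/- For every integer r ≥ 2, the reducible elements of the complete fundamental basic block L_r are exactly A₁, …, A_r: each A_i has at least two lower covers or at least two upper covers, while every element x_i and every element c_{ij} has exactly one lower cover and exactly one upper cover. In particular, L_r is an RC-lattice with |Red(L_r)| = r. -/
namespace Lr

variable {r : ℕ}

instance : Finite (Lr r) := by unfold Lr; infer_instance

/-- Chain elements, as elements of `L_r`. -/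
abbrev ι (a : Fin (2 * r - 1)) : Lr r := Sum.inl a

/-- Irreducible elements `c_{ij}`, as elements of `L_r`. -/
abbrev κ (c : {p : Fin r × Fin r // (p.1 : ℕ) < (p.2 : ℕ)}) : Lr r := Sum.inr c

lemma inl_le_inl {a b : Fin (2 * r - 1)} :
    ι a ≤ ι b ↔ (a : ℕ) ≤ (b : ℕ) := Iff.rfl

lemma inl_le_inr {a : Fin (2 * r - 1)} {c : {p : Fin r × Fin r // (p.1 : ℕ) < (p.2 : ℕ)}} :
    ι a ≤ κ c ↔ (a : ℕ) ≤ 2 * (c.1.1 : ℕ) := Iff.rfl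

lemma inr_le_inl {a : Fin (2 * r - 1)} {c : {p : Fin r × Fin r // (p.1 : ℕ) < (p.2 : ℕ)}} :
    κ c ≤ ι a ↔ 2 * (c.1.2 : ℕ) ≤ (a : ℕ) := Iff.rfl

lemma inr_le_inr {c c' : {p : Fin r × Fin r // (p.1 : ℕ) < (p.2 : ℕ)}} :
    κ c ≤ κ c' ↔
      (((c.1.1 : ℕ) = (c'.1.1 : ℕ) ∧ (c.1.2 : ℕ) = (c'.1.2 : ℕ)) ∨
        (c.1.2 : ℕ) ≤ (c'.1.1 : ℕ)) := Iff.rfl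

lemma inl_lt_inl {a b : Fin (2 * r - 1)} :
    ι a < ι b ↔ (a : ℕ) < (b : ℕ) := by
  rw [lt_iff_le_not_ge, inl_le_inl, inl_le_inl]; omega

lemma inl_lt_inr {a : Fin (2 * r - 1)} {c : {p : Fin r × Fin r // (p.1 : ℕ) < (p.2 : ℕ)}} :
    ι a < κ c ↔ (a : ℕ) ≤ 2 * (c.1.1 : ℕ) := by
  have := c.2
  rw [lt_iff_le_not_ge, inl_le_inr, inr_le_inl]; omega

lemma inr_lt_inl {a : Fin (2 * r - 1)} {c : {p : Fin r × Fin r // (p.1 : ℕ) < (p.2 : ℕ)}} :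
    κ c < ι a ↔ 2 * (c.1.2 : ℕ) ≤ (a : ℕ) := by
  have := c.2
  rw [lt_iff_le_not_ge, inr_le_inl, inl_le_inr]; omega

lemma inr_lt_inr {c c' : {p : Fin r × Fin r // (p.1 : ℕ) < (p.2 : ℕ)}} :
    κ c < κ c' ↔ (c.1.2 : ℕ) ≤ (c'.1.1 : ℕ) := by
  have := c.2; have := c'.2
  rw [lt_iff_le_not_ge, inr_le_inr, inr_le_inr]; omega

/-- Consecutive chain elements cover each other. -/
lemma chain_covBy {a b : Fin (2 * r - 1)} (h : (b : ℕ) = (a : ℕ) + 1) :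
    ι a ⋖ ι b := by
  refine ⟨inl_lt_inl.2 (by omega), ?_⟩
  rintro (k | d) h1 h2
  · rw [show (Sum.inl k : Lr r) = ι k from rfl] at h1 h2
    rw [inl_lt_inl] at h1; rw [inl_lt_inl] at h2; omega
  · rw [show (Sum.inr d : Lr r) = κ d from rfl] at h1 h2
    rw [inl_lt_inr] at h1; rw [inr_lt_inl] at h2; have := d.2; omega

/-- `A_i ⋖ c_{ij}`. -/
lemma covBy_inr {a : Fin (2 * r - 1)} {c : {p : Fin r × Fin r // (p.1 : ℕ) < (p.2 : ℕ)}}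
    (h : (a : ℕ) = 2 * (c.1.1 : ℕ)) : ι a ⋖ κ c := by
  have hc := c.2
  refine ⟨inl_lt_inr.2 (by omega), ?_⟩
  rintro (k | d) h1 h2
  · rw [show (Sum.inl k : Lr r) = ι k from rfl] at h1 h2
    rw [inl_lt_inl] at h1; rw [inl_lt_inr] at h2; omega
  · rw [show (Sum.inr d : Lr r) = κ d from rfl] at h1 h2
    rw [inl_lt_inr] at h1; rw [inr_lt_inr] at h2; have := d.2; omega

/-- `c_{ij} ⋖ A_j`. -/
lemma inr_covBy {a : Fin (2 * r - 1)} {c : {p : Fin r × Fin r // (p.1 : ℕ) < (p.2 : ℕ)}}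
    (h : (a : ℕ) = 2 * (c.1.2 : ℕ)) : κ c ⋖ ι a := by
  have hc := c.2
  refine ⟨inr_lt_inl.2 (by omega), ?_⟩
  rintro (k | d) h1 h2
  · rw [show (Sum.inl k : Lr r) = ι k from rfl] at h1 h2
    rw [inr_lt_inl] at h1; rw [inl_lt_inl] at h2; omega
  · rw [show (Sum.inr d : Lr r) = κ d from rfl] at h1 h2
    rw [inr_lt_inr] at h1; rw [inr_lt_inl] at h2; have := d.2; omega

/-- The unique lower cover of `c_{ij}` is `A_i`. -/
lemma eq_of_covBy_inr {c : {p : Fin r × Fin r // (p.1 : ℕ) < (p.2 : ℕ)}} {w : Lr r}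
    (hw : w ⋖ κ c) :
    w = ι ⟨2 * (c.1.1 : ℕ), by have := c.2; have := c.1.2.isLt; omega⟩ := by
  have hc := c.2
  have hcr := c.1.2.isLt
  rcases w with k | d
  · rw [show (Sum.inl k : Lr r) = ι k from rfl] at hw ⊢
    have h1 : (k : ℕ) ≤ 2 * (c.1.1 : ℕ) := inl_lt_inr.1 hw.1
    have hk : (k : ℕ) = 2 * (c.1.1 : ℕ) := by
      by_contra hne
      have hz1 : ι (r := r) ⟨(k : ℕ) + 1, by omega⟩ < κ c :=
        inl_lt_inr.2 (show (k : ℕ) + 1 ≤ 2 * (c.1.1 : ℕ) by omega)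
      have hz2 : ι k < ι (r := r) ⟨(k : ℕ) + 1, by omega⟩ :=
        inl_lt_inl.2 (show (k : ℕ) < (k : ℕ) + 1 by omega)
      exact hw.2 hz2 hz1
    exact congrArg Sum.inl (Fin.ext hk)
  · rw [show (Sum.inr d : Lr r) = κ d from rfl] at hw ⊢
    have hd := d.2
    have h1 : (d.1.2 : ℕ) ≤ (c.1.1 : ℕ) := inr_lt_inr.1 hw.1
    have hz1 : κ d < ι (r := r) ⟨2 * (d.1.2 : ℕ), by omega⟩ :=
      inr_lt_inl.2 (show 2 * (d.1.2 : ℕ) ≤ 2 * (d.1.2 : ℕ) from le_rfl)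
    have hz2 : ι (r := r) ⟨2 * (d.1.2 : ℕ), by omega⟩ < κ c :=
      inl_lt_inr.2 (show 2 * (d.1.2 : ℕ) ≤ 2 * (c.1.1 : ℕ) by omega)
    exact (hw.2 hz1 hz2).elim

/-- The unique upper cover of `c_{ij}` is `A_j`. -/
lemma eq_of_inr_covBy {c : {p : Fin r × Fin r // (p.1 : ℕ) < (p.2 : ℕ)}} {w : Lr r}
    (hw : κ c ⋖ w) :
    w = ι ⟨2 * (c.1.2 : ℕ), by have := c.1.2.isLt; omega⟩ := by
  have hc := c.2
  have hcr := c.1.2.isLt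
  rcases w with k | d
  · rw [show (Sum.inl k : Lr r) = ι k from rfl] at hw ⊢
    have h1 : 2 * (c.1.2 : ℕ) ≤ (k : ℕ) := inr_lt_inl.1 hw.1
    have hk : (k : ℕ) = 2 * (c.1.2 : ℕ) := by
      by_contra hne
      have hz1 : κ c < ι (r := r) ⟨(k : ℕ) - 1, by have := k.isLt; omega⟩ :=
        inr_lt_inl.2 (show 2 * (c.1.2 : ℕ) ≤ (k : ℕ) - 1 by omega)
      have hz2 : ι (r := r) ⟨(k : ℕ) - 1, by have := k.isLt; omega⟩ < ι k :=
        inl_lt_inl.2 (show (k : ℕ) - 1 < (k : ℕ) by omega)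
      exact hw.2 hz1 hz2
    exact congrArg Sum.inl (Fin.ext hk)
  · rw [show (Sum.inr d : Lr r) = κ d from rfl] at hw ⊢
    have hd := d.2
    have hdr := d.1.2.isLt
    have h1 : (c.1.2 : ℕ) ≤ (d.1.1 : ℕ) := inr_lt_inr.1 hw.1
    have hz1 : κ c < ι (r := r) ⟨2 * (d.1.1 : ℕ), by omega⟩ :=
      inr_lt_inl.2 (show 2 * (c.1.2 : ℕ) ≤ 2 * (d.1.1 : ℕ) by omega)
    have hz2 : ι (r := r) ⟨2 * (d.1.1 : ℕ), by omega⟩ < κ d :=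
      inl_lt_inr.2 (show 2 * (d.1.1 : ℕ) ≤ 2 * (d.1.1 : ℕ) from le_rfl)
    exact (hw.2 hz1 hz2).elim

/-- The unique lower cover of the odd chain element `x_{m+1}` is `A_{m+1}`. -/
lemma eq_of_covBy_odd {a : Fin (2 * r - 1)} {m : ℕ} (ha : (a : ℕ) = 2 * m + 1) {w : Lr r}
    (hw : w ⋖ ι a) :
    w = ι ⟨2 * m, by have := a.isLt; omega⟩ := by
  have har := a.isLt
  rcases w with k | d
  · rw [show (Sum.inl k : Lr r) = ι k from rfl] at hw ⊢
    have h1 : (k : ℕ) < (a : ℕ) := inl_lt_inl.1 hw.1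
    have hk : (k : ℕ) = 2 * m := by
      by_contra hne
      have hz1 : ι (r := r) k < ι ⟨(k : ℕ) + 1, by omega⟩ :=
        inl_lt_inl.2 (show (k : ℕ) < (k : ℕ) + 1 by omega)
      have hz2 : ι (r := r) ⟨(k : ℕ) + 1, by omega⟩ < ι a :=
        inl_lt_inl.2 (show (k : ℕ) + 1 < (a : ℕ) by omega)
      exact hw.2 hz1 hz2
    exact congrArg Sum.inl (Fin.ext hk)
  · rw [show (Sum.inr d : Lr r) = κ d from rfl] at hw ⊢
    have hd := d.2
    have h1 : 2 * (d.1.2 : ℕ) ≤ (a : ℕ) := inr_lt_inl.1 hw.1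
    have hz1 : κ d < ι (r := r) ⟨2 * (d.1.2 : ℕ), by omega⟩ :=
      inr_lt_inl.2 (show 2 * (d.1.2 : ℕ) ≤ 2 * (d.1.2 : ℕ) from le_rfl)
    have hz2 : ι (r := r) ⟨2 * (d.1.2 : ℕ), by omega⟩ < ι a :=
      inl_lt_inl.2 (show 2 * (d.1.2 : ℕ) < (a : ℕ) by omega)
    exact (hw.2 hz1 hz2).elim

/-- The unique upper cover of the odd chain element `x_{m+1}` is `A_{m+2}`. -/
lemma eq_of_odd_covBy {a : Fin (2 * r - 1)} {m : ℕ} (ha : (a : ℕ) = 2 * m + 1) {w : Lr r}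
    (hw : ι a ⋖ w) :
    w = ι ⟨2 * m + 2, by have := a.isLt; omega⟩ := by
  have har := a.isLt
  rcases w with k | d
  · rw [show (Sum.inl k : Lr r) = ι k from rfl] at hw ⊢
    have h1 : (a : ℕ) < (k : ℕ) := inl_lt_inl.1 hw.1
    have hk : (k : ℕ) = 2 * m + 2 := by
      by_contra hne
      have hz1 : ι (r := r) a < ι ⟨2 * m + 2, by have := k.isLt; omega⟩ :=
        inl_lt_inl.2 (show (a : ℕ) < 2 * m + 2 by omega)
      have hz2 : ι (r := r) ⟨2 * m + 2, by have := k.isLt; omega⟩ < ι k :=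
        inl_lt_inl.2 (show 2 * m + 2 < (k : ℕ) by omega)
      exact hw.2 hz1 hz2
    exact congrArg Sum.inl (Fin.ext hk)
  · rw [show (Sum.inr d : Lr r) = κ d from rfl] at hw ⊢
    have hd := d.2
    have hdr := d.1.2.isLt
    have h1 : (a : ℕ) ≤ 2 * (d.1.1 : ℕ) := inl_lt_inr.1 hw.1
    have hz1 : ι (r := r) a < ι ⟨2 * (d.1.1 : ℕ), by omega⟩ :=
      inl_lt_inl.2 (show (a : ℕ) < 2 * (d.1.1 : ℕ) by omega)
    have hz2 : ι (r := r) ⟨2 * (d.1.1 : ℕ), by omega⟩ < κ d :=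
      inl_lt_inr.2 (show 2 * (d.1.1 : ℕ) ≤ 2 * (d.1.1 : ℕ) from le_rfl)
    exact (hw.2 hz1 hz2).elim

end Lr

/-- for `r ≥ 2`, the reducible elements of `L_r` are exactly
`A₁, …, A_r`: each `A_i` has at least two lower covers or at least two upper
covers, while each `x_i` and each `c_{ij}` has exactly one lower cover and
exactly one upper cover; in particular `L_r` is an RC-lattice (any two
reducible elements are comparable) with exactly `r` reducible elements. -/
theorem reducibles_of_Lr (r : ℕ) (hr : 2 ≤ r) :
    (∀ z : Lr r, Reducible z ↔ ∃ i : Fin r, z = Lr.A i) ∧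
    (∀ i : Fin r,
      2 ≤ Nat.card {w : Lr r // w ⋖ Lr.A i} ∨
        2 ≤ Nat.card {w : Lr r // Lr.A i ⋖ w}) ∧
    (∀ i : Fin (r - 1),
      (∃! w : Lr r, w ⋖ Lr.X i) ∧ (∃! w : Lr r, Lr.X i ⋖ w)) ∧
    (∀ (i j : Fin r) (h : (i : ℕ) < (j : ℕ)),
      (∃! w : Lr r, w ⋖ Lr.c i j h) ∧ (∃! w : Lr r, Lr.c i j h ⋖ w)) ∧
    (∀ x y : Lr r, Reducible x → Reducible y → x ≤ y ∨ y ≤ x) ∧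
    Nat.card {z : Lr r // Reducible z} = r := by
  -- every `A i` has two distinct covers on one side
  have hcov2 : ∀ i : Fin r,
      (∃ w1 w2 : Lr r, w1 ≠ w2 ∧ Lr.A i ⋖ w1 ∧ Lr.A i ⋖ w2) ∨
      (∃ w1 w2 : Lr r, w1 ≠ w2 ∧ w1 ⋖ Lr.A i ∧ w2 ⋖ Lr.A i) := by
    intro i
    rcases lt_or_ge (i : ℕ) (r - 1) with hi | hi
    · left
      have hb1 : 2 * (i : ℕ) + 1 < 2 * r - 1 := by omega
      have hj : (i : ℕ) + 1 < r := by omega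
      refine ⟨Lr.ι ⟨2 * (i : ℕ) + 1, hb1⟩,
        Lr.κ ⟨(i, ⟨(i : ℕ) + 1, hj⟩), Nat.lt_succ_self _⟩, by simp, ?_, ?_⟩
      · exact Lr.chain_covBy rfl
      · exact Lr.covBy_inr rfl
    · right
      have hi' : (i : ℕ) = r - 1 := by have := i.isLt; omega
      have hb1 : 2 * (i : ℕ) - 1 < 2 * r - 1 := by omega
      have h0r : 0 < r := by omega
      refine ⟨Lr.ι ⟨2 * (i : ℕ) - 1, hb1⟩,
        Lr.κ ⟨(⟨0, h0r⟩, i), show (0 : ℕ) < (i : ℕ) by omega⟩, by simp, ?_, ?_⟩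
      · exact Lr.chain_covBy (show 2 * (i : ℕ) = 2 * (i : ℕ) - 1 + 1 by omega)
      · exact Lr.inr_covBy rfl
  have hred : ∀ i : Fin r, Reducible (Lr.A i) := by
    intro i hdi
    rcases hcov2 i with ⟨w1, w2, hne, h1, h2⟩ | ⟨w1, w2, hne, h1, h2⟩
    · exact hne (hdi.2 h1 h2)
    · exact hne (hdi.1 h1 h2)
  have hirr_odd : ∀ k : Fin (2 * r - 1), (k : ℕ) % 2 = 1 → DoublyIrreducible (Lr.ι k) := by
    intro k hk
    obtain ⟨m, hm⟩ : ∃ m, (k : ℕ) = 2 * m + 1 := ⟨(k : ℕ) / 2, by omega⟩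
    constructor
    · intro w hw w' hw'
      rw [Lr.eq_of_covBy_odd hm hw, Lr.eq_of_covBy_odd hm hw']
    · intro w hw w' hw'
      rw [Lr.eq_of_odd_covBy hm hw, Lr.eq_of_odd_covBy hm hw']
  have hirr_c : ∀ d : {p : Fin r × Fin r // (p.1 : ℕ) < (p.2 : ℕ)},
      DoublyIrreducible (Lr.κ d) := by
    intro d
    constructor
    · intro w hw w' hw'
      rw [Lr.eq_of_covBy_inr hw, Lr.eq_of_covBy_inr hw']
    · intro w hw w' hw'
      rw [Lr.eq_of_inr_covBy hw, Lr.eq_of_inr_covBy hw']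
  have hpart1 : ∀ z : Lr r, Reducible z ↔ ∃ i : Fin r, z = Lr.A i := by
    intro z
    constructor
    · intro hz
      by_contra hno
      push_neg at hno
      apply hz
      rcases z with k | d
      · rcases Nat.even_or_odd (k : ℕ) with he | ho
        · obtain ⟨m, hm⟩ := he
          have hmr : m < r := by have := k.isLt; omega
          exact absurd (congrArg Sum.inl (Fin.ext (show (k : ℕ) = 2 * m by omega)))
            (hno ⟨m, hmr⟩)
        · obtain ⟨m, hm⟩ := ho
          exact hirr_odd k (by omega)
      · exact hirr_c d
    · rintro ⟨i, rfl⟩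
      exact hred i
  refine ⟨hpart1, ?_, ?_, ?_, ?_, ?_⟩
  · intro i
    rcases hcov2 i with ⟨w1, w2, hne, h1, h2⟩ | ⟨w1, w2, hne, h1, h2⟩
    · right
      have hf : Function.Injective
          (fun b : Bool => cond b (⟨w2, h2⟩ : {w : Lr r // Lr.A i ⋖ w}) ⟨w1, h1⟩) := by
        intro b b' hbb
        cases b <;> cases b' <;> simp_all
      have := Nat.card_le_card_of_injective _ hf
      rwa [Nat.card_eq_fintype_card, Fintype.card_bool] at this
    · left
      have hf : Function.Injective
          (fun b : Bool => cond b (⟨w2, h2⟩ : {w : Lr r // w ⋖ Lr.A i}) ⟨w1, h1⟩) := by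
        intro b b' hbb
        cases b <;> cases b' <;> simp_all
      have := Nat.card_le_card_of_injective _ hf
      rwa [Nat.card_eq_fintype_card, Fintype.card_bool] at this
  · intro i
    have hb : 2 * (i : ℕ) + 1 < 2 * r - 1 := by have := i.isLt; omega
    constructor
    · refine ⟨Lr.ι ⟨2 * (i : ℕ), by omega⟩, Lr.chain_covBy rfl, ?_⟩
      intro w hw
      exact Lr.eq_of_covBy_odd (a := ⟨2 * (i : ℕ) + 1, hb⟩) (m := (i : ℕ)) rfl hw
    · refine ⟨Lr.ι ⟨2 * (i : ℕ) + 2, by have := i.isLt; omega⟩, Lr.chain_covBy rfl, ?_⟩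
      intro w hw
      exact Lr.eq_of_odd_covBy (a := ⟨2 * (i : ℕ) + 1, hb⟩) (m := (i : ℕ)) rfl hw
  · intro i j h
    have hjr := j.isLt
    constructor
    · refine ⟨Lr.ι ⟨2 * (i : ℕ), by omega⟩, Lr.covBy_inr rfl, ?_⟩
      intro w hw
      exact Lr.eq_of_covBy_inr (c := ⟨(i, j), h⟩) hw
    · refine ⟨Lr.ι ⟨2 * (j : ℕ), by omega⟩, Lr.inr_covBy rfl, ?_⟩
      intro w hw
      exact Lr.eq_of_inr_covBy (c := ⟨(i, j), h⟩) hw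
  · intro x y hx hy
    obtain ⟨i, rfl⟩ := (hpart1 x).1 hx
    obtain ⟨j, rfl⟩ := (hpart1 y).1 hy
    rcases le_total (i : ℕ) (j : ℕ) with hij | hij
    · exact Or.inl (Lr.inl_le_inl.2 (show 2 * (i : ℕ) ≤ 2 * (j : ℕ) by omega))
    · exact Or.inr (Lr.inl_le_inl.2 (show 2 * (j : ℕ) ≤ 2 * (i : ℕ) by omega))
  · have hf : Function.Bijective
        (fun i : Fin r => (⟨Lr.A i, (hpart1 _).2 ⟨i, rfl⟩⟩ : {z : Lr r // Reducible z})) := by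
      constructor
      · intro i j hij
        have h2 : Lr.A i = Lr.A j := congrArg Subtype.val hij
        have h3 := Sum.inl.inj h2
        have h4 : 2 * (i : ℕ) = 2 * (j : ℕ) := congrArg Fin.val h3
        exact Fin.ext (by omega)
      · rintro ⟨z, hz⟩
        obtain ⟨i, rfl⟩ := (hpart1 z).1 hz
        exact ⟨i, rfl⟩
    rw [← Nat.card_eq_of_bijective _ hf, Nat.card_eq_fintype_card, Fintype.card_fin]
end

section
/- Let 2 ≤ r ≤ 4, let C be a finite nonempty chain disjoint from L_r, and let 1 ≤ i < j ≤ r. Then the adjunct L = L_r ]^{A_j}_{A_i} C (with respect to the adjunct pair (A_i, A_j) of L_r) satisfies Dim(L) = 2. -/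
namespace Dim16


theorem isLinearOrder_comap {γ : Type*} (f : γ → ℤ) (hf : Function.Injective f) :
    IsLinearOrder γ (fun x y => f x ≤ f y) where
  refl _ := le_refl _
  trans _ _ _ := le_trans
  antisymm _ _ h h' := hf (le_antisymm h h')
  total _ _ := le_total _ _

theorem realizer_two {γ : Type*} (le : γ → γ → Prop) (F G : γ → ℤ)
    (hF : Function.Injective F) (hG : Function.Injective G)
    (h : ∀ x y, le x y ↔ F x ≤ F y ∧ G x ≤ G y) :
    ∃ R : Fin 2 → γ → γ → Prop, IsRealizer le R := by
  refine ⟨![fun x y => F x ≤ F y, fun x y => G x ≤ G y], fun i => ?_, fun x y => ?_⟩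
  · fin_cases i
    · exact isLinearOrder_comap F hF
    · exact isLinearOrder_comap G hG
  · rw [h, Fin.forall_fin_two]
    simp [Matrix.cons_val_zero, Matrix.cons_val_one, Matrix.head_cons]

theorem exists_realizer_adjunct {α β : Type*} [PartialOrder α] [LinearOrder β]
    [Finite β] [Nonempty β] (a b : α) (f1 f2 : α → ℕ) (t1 t2 : ℕ)
    (hinj1 : Function.Injective f1) (hinj2 : Function.Injective f2)
    (H : ∀ x y : α, x ≤ y ↔ f1 x ≤ f1 y ∧ f2 x ≤ f2 y)
    (HA : ∀ x : α, x ≤ a ↔ f1 x < t1 ∧ f2 x < t2)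
    (HB : ∀ x : α, b ≤ x ↔ t1 ≤ f1 x ∧ t2 ≤ f2 x) :
    ∃ R : Fin 2 → (α ⊕ β) → (α ⊕ β) → Prop, IsRealizer (adjunctLE a b) R := by
  letI := Fintype.ofFinite β
  set n : ℕ := Fintype.card β with hndef
  let e : Fin n ≃o β := Fintype.orderIsoFinOfCardEq β rfl
  set g : β → ℤ := fun c => ((e.symm c : Fin n) : ℕ) with hgdef
  have hg0 : ∀ c : β, 0 ≤ g c := fun c => Int.natCast_nonneg _
  have hglt : ∀ c : β, g c < (n : ℤ) := fun c => by
    simp only [hgdef]; exact_mod_cast (e.symm c).2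
  have hgmono : ∀ c1 c2 : β, c1 ≤ c2 ↔ g c1 ≤ g c2 := fun c1 c2 => by
    simp only [hgdef, Nat.cast_le, ← Fin.le_def]
    exact e.symm.le_iff_le.symm
  have hginj : ∀ c1 c2 : β, g c1 = g c2 → c1 = c2 := fun c1 c2 h =>
    le_antisymm ((hgmono c1 c2).mpr h.le) ((hgmono c2 c1).mpr h.ge)
  set N : ℤ := (n : ℤ) + 1 with hNdef
  have hN : (0 : ℤ) < N := by rw [hNdef]; positivity
  -- key comparison facts
  have key : ∀ (f : α → ℕ) (t : ℕ) (x : α) (c : β),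
      (N * (f x : ℤ) ≤ N * (t : ℤ) - n + g c ↔ f x < t) ∧
      (N * (t : ℤ) - n + g c ≤ N * (f x : ℤ) ↔ t ≤ f x) := by
    intro f t x c
    have h1 : (0:ℤ) ≤ g c := hg0 c
    have h2 : g c < (n:ℤ) := hglt c
    rcases Nat.lt_or_ge (f x) t with hlt | hge
    · have hc : ((f x : ℤ) + 1) ≤ (t : ℤ) := by exact_mod_cast hlt
      have hm : N * ((f x : ℤ) + 1) ≤ N * (t : ℤ) :=
        mul_le_mul_of_nonneg_left hc hN.le
      rw [mul_add, mul_one] at hm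
      constructor
      · exact ⟨fun _ => hlt, fun _ => by linarith [hNdef.ge, hNdef.le]⟩
      · constructor
        · intro h; exfalso; linarith [hNdef.ge, hNdef.le]
        · intro h; omega
    · have hc : (t : ℤ) ≤ (f x : ℤ) := by exact_mod_cast hge
      have hm : N * (t : ℤ) ≤ N * (f x : ℤ) :=
        mul_le_mul_of_nonneg_left hc hN.le
      constructor
      · constructor
        · intro h; exfalso; linarith
        · intro h; omega
      · exact ⟨fun _ => hge, fun _ => by linarith⟩
  have hmul : ∀ u v : ℕ, u ≤ v ↔ N * (u : ℤ) ≤ N * (v : ℤ) := fun u v => by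
    constructor
    · intro h
      exact mul_le_mul_of_nonneg_left (by exact_mod_cast h) hN.le
    · intro h
      exact_mod_cast le_of_mul_le_mul_left h hN
  -- the two embeddings
  have injsum : ∀ (f : α → ℕ) (t : ℕ), Function.Injective f →
      Function.Injective (Sum.elim (fun x : α => N * (f x : ℤ))
        (fun c : β => N * (t : ℤ) - n + g c)) := by
    intro f t hf z w h
    rcases z with x | c <;> rcases w with y | c2 <;>
      simp only [Sum.elim_inl, Sum.elim_inr] at h
    · have : (f x : ℤ) = f y := mul_left_cancel₀ (ne_of_gt hN) h
      exact congrArg Sum.inl (hf (by exact_mod_cast this))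
    · exfalso
      have k1 := (key f t x c2).1.mp h.le
      have k2 := (key f t x c2).2.mp h.ge
      omega
    · exfalso
      have k1 := (key f t y c).1.mp h.ge
      have k2 := (key f t y c).2.mp h.le
      omega
    · have : g c = g c2 := by linarith
      exact congrArg Sum.inr (hginj _ _ this)
  apply realizer_two (adjunctLE a b)
    (Sum.elim (fun x : α => N * (f1 x : ℤ)) (fun c : β => N * (t1 : ℤ) - n + g c))
    (Sum.elim (fun x : α => N * (f2 x : ℤ)) (fun c : β => N * (t2 : ℤ) - n + g c))
    (injsum f1 t1 hinj1) (injsum f2 t2 hinj2)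
  intro z w
  rcases z with x | c <;> rcases w with y | c2 <;>
    simp only [adjunctLE, Sum.elim_inl, Sum.elim_inr]
  · rw [H x y]
    exact and_congr (hmul _ _) (hmul _ _)
  · rw [HA x]
    exact and_congr (key f1 t1 x c2).1.symm (key f2 t2 x c2).1.symm
  · rw [HB y]
    exact and_congr (key f1 t1 y c).2.symm (key f2 t2 y c).2.symm
  · rw [hgmono c c2]
    constructor
    · intro h; constructor <;> linarith
    · rintro ⟨h, -⟩; linarith

theorem two_le_of_realizer {γ : Type*} (le : γ → γ → Prop) (u v : γ)
    (hu : ¬ le u v) (hv : ¬ le v u) :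
    ∀ t : ℕ, 0 < t → (∃ R : Fin t → γ → γ → Prop, IsRealizer le R) → 2 ≤ t := by
  rintro t ht ⟨R, hR⟩
  by_contra hlt
  have h1 : t = 1 := by omega
  subst h1
  rcases (hR.1 0).total u v with h | h
  · exact hu ((hR.2 u v).2 (fun i => by
      rw [show i = 0 from Subsingleton.elim i 0]; exact h))
  · exact hv ((hR.2 v u).2 (fun i => by
      rw [show i = 0 from Subsingleton.elim i 0]; exact h))

theorem orderDim_eq_two {γ : Type*} (le : γ → γ → Prop)
    (h2 : ∃ R : Fin 2 → γ → γ → Prop, IsRealizer le R)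
    (u v : γ) (hu : ¬ le u v) (hv : ¬ le v u) : orderDim le = 2 := by
  have hmem : 2 ∈ {t | 0 < t ∧ ∃ R : Fin t → γ → γ → Prop, IsRealizer le R} :=
    ⟨by norm_num, h2⟩
  refine le_antisymm (Nat.sInf_le hmem) (le_csInf ⟨2, hmem⟩ ?_)
  rintro t ⟨ht, hR⟩
  exact two_le_of_realizer le u v hu hv t ht hR



instance {r : ℕ} : DecidableEq (Lr r) :=
  inferInstanceAs (DecidableEq (Fin (2*r-1) ⊕ {p : Fin r × Fin r // (p.1 : ℕ) < (p.2 : ℕ)}))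

instance {r : ℕ} : Fintype (Lr r) :=
  inferInstanceAs (Fintype (Fin (2*r-1) ⊕ {p : Fin r × Fin r // (p.1 : ℕ) < (p.2 : ℕ)}))

instance {r : ℕ} : DecidableRel (α := Lr r) (· ≤ ·) := fun x y =>
  match x, y with
  | Sum.inl k, Sum.inl k' => inferInstanceAs (Decidable ((k : ℕ) ≤ (k' : ℕ)))
  | Sum.inl k, Sum.inr c => inferInstanceAs (Decidable ((k : ℕ) ≤ 2 * (c.1.1 : ℕ)))
  | Sum.inr c, Sum.inl k => inferInstanceAs (Decidable (2 * (c.1.2 : ℕ) ≤ (k : ℕ)))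
  | Sum.inr c, Sum.inr c' => inferInstanceAs (Decidable
      ((((c.1.1 : ℕ) = (c'.1.1 : ℕ) ∧ (c.1.2 : ℕ) = (c'.1.2 : ℕ)) ∨
        (c.1.2 : ℕ) ≤ (c'.1.1 : ℕ))))

-- r = 2 tables
def f1₂ : Lr 2 → ℕ
  | Sum.inl k => [0, 2, 3].getD k.1 0
  | Sum.inr _ => 1
def f2₂ : Lr 2 → ℕ
  | Sum.inl k => [0, 1, 3].getD k.1 0
  | Sum.inr _ => 2
def T1₂ : Fin 2 → Fin 2 → ℕ := fun _ _ => 1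
def T2₂ : Fin 2 → Fin 2 → ℕ := fun _ _ => 3

-- r = 3 tables
def f1₃ : Lr 3 → ℕ
  | Sum.inl k => [0, 2, 3, 4, 7].getD k.1 0
  | Sum.inr c => ([[0, 1, 6], [0, 0, 5], [0, 0, 0]].getD c.1.1.1 []).getD c.1.2.1 0
def f2₃ : Lr 3 → ℕ
  | Sum.inl k => [0, 2, 4, 6, 7].getD k.1 0
  | Sum.inr c => ([[0, 3, 1], [0, 0, 5], [0, 0, 0]].getD c.1.1.1 []).getD c.1.2.1 0
def T1₃ : Fin 3 → Fin 3 → ℕ := fun i j =>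
  ([[0, 1, 1], [0, 0, 4], [0, 0, 0]].getD i.1 []).getD j.1 0
def T2₃ : Fin 3 → Fin 3 → ℕ := fun i j =>
  ([[0, 4, 7], [0, 0, 7], [0, 0, 0]].getD i.1 []).getD j.1 0

-- r = 4 tables
def f1₄ : Lr 4 → ℕ
  | Sum.inl k => [0, 2, 3, 5, 8, 9, 12].getD k.1 0
  | Sum.inr c => ([[0, 1, 7, 11], [0, 0, 6, 4], [0, 0, 0, 10], [0, 0, 0, 0]].getD
      c.1.1.1 []).getD c.1.2.1 0
def f2₄ : Lr 4 → ℕ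
  | Sum.inl k => [0, 3, 5, 7, 8, 10, 12].getD k.1 0
  | Sum.inr c => ([[0, 4, 2, 1], [0, 0, 6, 11], [0, 0, 0, 9], [0, 0, 0, 0]].getD
      c.1.1.1 []).getD c.1.2.1 0
def T1₄ : Fin 4 → Fin 4 → ℕ := fun i j =>
  ([[0, 1, 7, 1], [0, 0, 5, 4], [0, 0, 0, 9], [0, 0, 0, 0]].getD i.1 []).getD j.1 0
def T2₄ : Fin 4 → Fin 4 → ℕ := fun i j =>
  ([[0, 5, 3, 12], [0, 0, 8, 12], [0, 0, 0, 11], [0, 0, 0, 0]].getD i.1 []).getD j.1 0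

theorem facts₂ :
    (∀ x y : Lr 2, f1₂ x = f1₂ y → x = y) ∧
    (∀ x y : Lr 2, f2₂ x = f2₂ y → x = y) ∧
    (∀ x y : Lr 2, x ≤ y ↔ f1₂ x ≤ f1₂ y ∧ f2₂ x ≤ f2₂ y) ∧
    (∀ i j : Fin 2, (i : ℕ) < (j : ℕ) →
      (∀ x : Lr 2, x ≤ Lr.A i ↔ f1₂ x < T1₂ i j ∧ f2₂ x < T2₂ i j) ∧
      (∀ x : Lr 2, Lr.A j ≤ x ↔ T1₂ i j ≤ f1₂ x ∧ T2₂ i j ≤ f2₂ x)) := by decide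

theorem facts₃ :
    (∀ x y : Lr 3, f1₃ x = f1₃ y → x = y) ∧
    (∀ x y : Lr 3, f2₃ x = f2₃ y → x = y) ∧
    (∀ x y : Lr 3, x ≤ y ↔ f1₃ x ≤ f1₃ y ∧ f2₃ x ≤ f2₃ y) ∧
    (∀ i j : Fin 3, (i : ℕ) < (j : ℕ) →
      (∀ x : Lr 3, x ≤ Lr.A i ↔ f1₃ x < T1₃ i j ∧ f2₃ x < T2₃ i j) ∧
      (∀ x : Lr 3, Lr.A j ≤ x ↔ T1₃ i j ≤ f1₃ x ∧ T2₃ i j ≤ f2₃ x)) := by decide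

theorem facts₄ :
    (∀ x y : Lr 4, f1₄ x = f1₄ y → x = y) ∧
    (∀ x y : Lr 4, f2₄ x = f2₄ y → x = y) ∧
    (∀ x y : Lr 4, x ≤ y ↔ f1₄ x ≤ f1₄ y ∧ f2₄ x ≤ f2₄ y) ∧
    (∀ i j : Fin 4, (i : ℕ) < (j : ℕ) →
      (∀ x : Lr 4, x ≤ Lr.A i ↔ f1₄ x < T1₄ i j ∧ f2₄ x < T2₄ i j) ∧
      (∀ x : Lr 4, Lr.A j ≤ x ↔ T1₄ i j ≤ f1₄ x ∧ T2₄ i j ≤ f2₄ x)) := by decide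


-- incomparable pairs (chain element x₁ and c₁₂)
def u₂ : Lr 2 := Sum.inl ⟨1, by omega⟩
def v₂ : Lr 2 := Sum.inr ⟨((0 : Fin 2), (1 : Fin 2)), by decide⟩
def u₃ : Lr 3 := Sum.inl ⟨1, by omega⟩
def v₃ : Lr 3 := Sum.inr ⟨((0 : Fin 3), (1 : Fin 3)), by decide⟩
def u₄ : Lr 4 := Sum.inl ⟨1, by omega⟩
def v₄ : Lr 4 := Sum.inr ⟨((0 : Fin 4), (1 : Fin 4)), by decide⟩

theorem incomp₂ : ¬ (u₂ ≤ v₂) ∧ ¬ (v₂ ≤ u₂) := by decide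
theorem incomp₃ : ¬ (u₃ ≤ v₃) ∧ ¬ (v₃ ≤ u₃) := by decide
theorem incomp₄ : ¬ (u₄ ≤ v₄) ∧ ¬ (v₄ ≤ u₄) := by decide

theorem aux_final {r : ℕ} {β : Type*} [LinearOrder β] [Finite β] [Nonempty β]
    (i j : Fin r) (f1 f2 : Lr r → ℕ) (T1 T2 : Fin r → Fin r → ℕ)
    (hinj1 : ∀ x y : Lr r, f1 x = f1 y → x = y)
    (hinj2 : ∀ x y : Lr r, f2 x = f2 y → x = y)
    (hH : ∀ x y : Lr r, x ≤ y ↔ f1 x ≤ f1 y ∧ f2 x ≤ f2 y)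
    (hA : ∀ x : Lr r, x ≤ Lr.A i ↔ f1 x < T1 i j ∧ f2 x < T2 i j)
    (hB : ∀ x : Lr r, Lr.A j ≤ x ↔ T1 i j ≤ f1 x ∧ T2 i j ≤ f2 x)
    (u v : Lr r) (huv : ¬ (u ≤ v)) (hvu : ¬ (v ≤ u)) :
    orderDim (adjunctLE (α := Lr r) (β := β) (Lr.A i) (Lr.A j)) = 2 := by
  refine orderDim_eq_two _ ?_ (Sum.inl u) (Sum.inl v) ?_ ?_
  · exact exists_realizer_adjunct (Lr.A i) (Lr.A j) f1 f2 (T1 i j) (T2 i j)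
      (fun x y => hinj1 x y) (fun x y => hinj2 x y) hH hA hB
  · exact fun h => huv h
  · exact fun h => hvu h

end Dim16

/-- for `2 ≤ r ≤ 4`, adjoining a finite nonempty chain to `L_r`
along the adjunct pair `(A_i, A_j)` (`1 ≤ i < j ≤ r`) yields a lattice of
order dimension `2`. -/
theorem dim_Lr_adjunct_chain_small (r : ℕ) (h2 : 2 ≤ r) (h4 : r ≤ 4)
    {β : Type*} [LinearOrder β] [Finite β] [Nonempty β]
    (i j : Fin r) (hij : (i : ℕ) < (j : ℕ)) :
    orderDim (adjunctLE (α := Lr r) (β := β) (Lr.A i) (Lr.A j)) = 2 := by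
  interval_cases r
  · obtain ⟨hinj1, hinj2, hH, hT⟩ := Dim16.facts₂
    exact Dim16.aux_final i j _ _ _ _ hinj1 hinj2 hH (hT i j hij).1 (hT i j hij).2
      Dim16.u₂ Dim16.v₂ Dim16.incomp₂.1 Dim16.incomp₂.2
  · obtain ⟨hinj1, hinj2, hH, hT⟩ := Dim16.facts₃
    exact Dim16.aux_final i j _ _ _ _ hinj1 hinj2 hH (hT i j hij).1 (hT i j hij).2
      Dim16.u₃ Dim16.v₃ Dim16.incomp₃.1 Dim16.incomp₃.2
  · obtain ⟨hinj1, hinj2, hH, hT⟩ := Dim16.facts₄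
    exact Dim16.aux_final i j _ _ _ _ hinj1 hinj2 hH (hT i j hij).1 (hT i j hij).2
      Dim16.u₄ Dim16.v₄ Dim16.incomp₄.1 Dim16.incomp₄.2
end

section
/- Let L₁ and L₂ be finite lattices and let L = L₁ ]ᵇₐ L₂ be their adjunct with respect to a pair a < b in L₁ with b not covering a. Then the adjunct order on L₁ ∪ L₂ is a lattice, and both L₁ and L₂ (with their original orders) are sublattices of L. -/
/-- the adjunct order of two finite lattices is a lattice, and
both summands are sublattices of it (the joins and meets computed in the
adjunct of elements of `L₁` (resp. `L₂`) agree with those of `L₁`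
(resp. `L₂`)). -/
theorem adjunct_is_lattice {α β : Type*} [Lattice α] [Lattice β]
    [Finite α] [Finite β] {a b : α} (hab : a < b) (hcov : ¬ a ⋖ b) :
    IsPartialOrder (α ⊕ β) (adjunctLE a b) ∧
    (∀ x y : α ⊕ β, ∃ s, IsLUBRel (adjunctLE a b) x y s) ∧
    (∀ x y : α ⊕ β, ∃ s, IsGLBRel (adjunctLE a b) x y s) ∧
    (∀ x y : α,
      IsLUBRel (adjunctLE (α := α) (β := β) a b)
        (Sum.inl x) (Sum.inl y) (Sum.inl (x ⊔ y)) ∧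
      IsGLBRel (adjunctLE (α := α) (β := β) a b)
        (Sum.inl x) (Sum.inl y) (Sum.inl (x ⊓ y))) ∧
    (∀ x y : β,
      IsLUBRel (adjunctLE (α := α) (β := β) a b)
        (Sum.inr x) (Sum.inr y) (Sum.inr (x ⊔ y)) ∧
      IsGLBRel (adjunctLE (α := α) (β := β) a b)
        (Sum.inr x) (Sum.inr y) (Sum.inr (x ⊓ y))) := by
  classical
  have hba : ¬ b ≤ a := hab.not_ge
  -- sublattice facts
  have hL : ∀ x y : α,
      IsLUBRel (adjunctLE (α := α) (β := β) a b)
        (Sum.inl x) (Sum.inl y) (Sum.inl (x ⊔ y)) ∧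
      IsGLBRel (adjunctLE (α := α) (β := β) a b)
        (Sum.inl x) (Sum.inl y) (Sum.inl (x ⊓ y)) := by
    intro x y
    constructor
    · refine ⟨le_sup_left, le_sup_right, ?_⟩
      intro z hx hy
      cases z with
      | inl w => exact sup_le hx hy
      | inr w => exact sup_le hx hy
    · refine ⟨inf_le_left, inf_le_right, ?_⟩
      intro z hx hy
      cases z with
      | inl w => exact le_inf hx hy
      | inr w => exact le_inf hx hy
  have hR : ∀ x y : β,
      IsLUBRel (adjunctLE (α := α) (β := β) a b)
        (Sum.inr x) (Sum.inr y) (Sum.inr (x ⊔ y)) ∧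
      IsGLBRel (adjunctLE (α := α) (β := β) a b)
        (Sum.inr x) (Sum.inr y) (Sum.inr (x ⊓ y)) := by
    intro x y
    constructor
    · refine ⟨le_sup_left, le_sup_right, ?_⟩
      intro z hx hy
      cases z with
      | inl w => exact hx
      | inr w => exact sup_le hx hy
    · refine ⟨inf_le_left, inf_le_right, ?_⟩
      intro z hx hy
      cases z with
      | inl w => exact hx
      | inr w => exact le_inf hx hy
  refine ⟨?_, ?_, ?_, hL, hR⟩
  · -- partial order
    refine { refl := ?_, trans := ?_, antisymm := ?_ }
    · intro x; cases x with
      | inl x => exact le_refl x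
      | inr x => exact le_refl x
    · intro x y z hxy hyz
      cases x with
      | inl x => cases y with
        | inl y => cases z with
          | inl z => exact le_trans hxy hyz
          | inr z => exact le_trans hxy hyz
        | inr y => cases z with
          | inl z => exact hxy.trans (hab.le.trans hyz)
          | inr z => exact hxy
      | inr x => cases y with
        | inl y => cases z with
          | inl z => exact le_trans hxy hyz
          | inr z => exact absurd (hxy.trans hyz) hba
        | inr y => cases z with
          | inl z => exact hyz
          | inr z => exact le_trans hxy hyz
    · intro x y hxy hyx
      cases x with
      | inl x => cases y with
        | inl y => exact congrArg Sum.inl (le_antisymm hxy hyx)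
        | inr y => exact absurd (hyx.trans hxy) hba
      | inr x => cases y with
        | inl y => exact absurd (hxy.trans hyx) hba
        | inr y => exact congrArg Sum.inr (le_antisymm hxy hyx)
  · -- LUBs exist
    intro x y
    cases x with
    | inl x => cases y with
      | inl y => exact ⟨_, (hL x y).1⟩
      | inr y =>
        by_cases hxa : x ≤ a
        · refine ⟨Sum.inr y, hxa, le_refl y, ?_⟩
          intro z hx hy
          cases z with
          | inl w => exact hy
          | inr w => exact hy
        · refine ⟨Sum.inl (x ⊔ b), le_sup_left, le_sup_right, ?_⟩
          intro z hx hy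
          cases z with
          | inl w => exact sup_le hx hy
          | inr w => exact absurd hx hxa
    | inr x => cases y with
      | inl y =>
        by_cases hya : y ≤ a
        · refine ⟨Sum.inr x, le_refl x, hya, ?_⟩
          intro z hx hy
          cases z with
          | inl w => exact hx
          | inr w => exact hx
        · refine ⟨Sum.inl (y ⊔ b), le_sup_right, le_sup_left, ?_⟩
          intro z hx hy
          cases z with
          | inl w => exact sup_le hy hx
          | inr w => exact absurd hy hya
      | inr y => exact ⟨_, (hR x y).1⟩
  · -- GLBs exist
    intro x y
    cases x with
    | inl x => cases y with
      | inl y => exact ⟨_, (hL x y).2⟩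
      | inr y =>
        by_cases hbx : b ≤ x
        · refine ⟨Sum.inr y, hbx, le_refl y, ?_⟩
          intro z hx hy
          cases z with
          | inl w => exact hy
          | inr w => exact hy
        · refine ⟨Sum.inl (x ⊓ a), inf_le_left, inf_le_right, ?_⟩
          intro z hx hy
          cases z with
          | inl w => exact le_inf hx hy
          | inr w => exact absurd hx hbx
    | inr x => cases y with
      | inl y =>
        by_cases hby : b ≤ y
        · refine ⟨Sum.inr x, le_refl x, hby, ?_⟩
          intro z hx hy
          cases z with
          | inl w => exact hx
          | inr w => exact hx
        · refine ⟨Sum.inl (y ⊓ a), inf_le_right, inf_le_left, ?_⟩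
          intro z hx hy
          cases z with
          | inl w => exact le_inf hy hx
          | inr w => exact absurd hy hby
      | inr y => exact ⟨_, (hR x y).2⟩
end

section
/- Let L₁ and L₂ be finite lattices with least element 0₂ and greatest element 1₂ of L₂, and let L = L₁ ]ᵇₐ L₂ be their adjunct with respect to a pair a < b in L₁ with b not covering a. Then the covering pairs of L are exactly: the covering pairs of L₁, the covering pairs of L₂, the pair (a, 0₂), and the pair (1₂, b). Consequently, the number of covering pairs of L equals |E(L₁)| + |E(L₂)| + 2, where E denotes the set of covering pairs. -/
section AdjAux

set_option linter.unusedSectionVars false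

variable {α β : Type*} [Lattice α] [Lattice β] [BoundedOrder β]
variable {a b : α}

lemma adj_cov_ll (hab : a < b) (hcov : ¬ a ⋖ b) (u v : α) :
    RelCovBy (adjunctLE a b) (Sum.inl u) (Sum.inl v : α ⊕ β) ↔ u ⋖ v := by
  constructor
  · rintro ⟨h1, h2, h3⟩
    have h1' : u ≤ v := h1
    refine ⟨lt_of_le_of_ne h1' (fun h => h2 (by rw [h])), fun c hc1 hc2 => ?_⟩
    rcases h3 (Sum.inl c) hc1.le hc2.le with h | h
    · exact absurd (Sum.inl.inj h) hc1.ne'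
    · exact absurd (Sum.inl.inj h) hc2.ne
  · intro h
    refine ⟨h.le, fun he => h.ne (Sum.inl.inj he), fun z hz1 hz2 => ?_⟩
    rcases z with w | w
    · have hw1 : u ≤ w := hz1
      have hw2 : w ≤ v := hz2
      rcases hw2.lt_or_eq with h'' | h''
      · rcases hw1.lt_or_eq with h' | h'
        · exact absurd h'' (h.2 h')
        · exact Or.inl (congrArg Sum.inl h'.symm)
      · exact Or.inr (congrArg Sum.inl h'')
    · exfalso
      have hw1 : u ≤ a := hz1
      have hw2 : b ≤ v := hz2
      rcases hw1.lt_or_eq with h' | h'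
      · exact h.2 h' (lt_of_lt_of_le hab hw2)
      · rcases hw2.lt_or_eq with h'' | h''
        · exact h.2 (h' ▸ hab) h''
        · exact hcov (h' ▸ h'' ▸ h)

lemma adj_cov_rr (hab : a < b) (u v : β) :
    RelCovBy (adjunctLE a b) (Sum.inr u : α ⊕ β) (Sum.inr v) ↔ u ⋖ v := by
  constructor
  · rintro ⟨h1, h2, h3⟩
    have h1' : u ≤ v := h1
    refine ⟨lt_of_le_of_ne h1' (fun h => h2 (by rw [h])), fun c hc1 hc2 => ?_⟩
    rcases h3 (Sum.inr c) hc1.le hc2.le with h | h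
    · exact absurd (Sum.inr.inj h) hc1.ne'
    · exact absurd (Sum.inr.inj h) hc2.ne
  · intro h
    refine ⟨h.le, fun he => h.ne (Sum.inr.inj he), fun z hz1 hz2 => ?_⟩
    rcases z with w | w
    · exfalso
      have hw1 : b ≤ w := hz1
      have hw2 : w ≤ a := hz2
      exact absurd (hw1.trans hw2) (not_le_of_gt hab)
    · have hw1 : u ≤ w := hz1
      have hw2 : w ≤ v := hz2
      rcases hw2.lt_or_eq with h'' | h''
      · rcases hw1.lt_or_eq with h' | h'
        · exact absurd h'' (h.2 h')
        · exact Or.inl (congrArg Sum.inr h'.symm)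
      · exact Or.inr (congrArg Sum.inr h'')

lemma adj_cov_lr (u : α) (v : β) :
    RelCovBy (adjunctLE a b) (Sum.inl u) (Sum.inr v : α ⊕ β) ↔
      u = a ∧ v = ⊥ := by
  constructor
  · rintro ⟨h1, h2, h3⟩
    have h1' : u ≤ a := h1
    constructor
    · rcases h3 (Sum.inl a : α ⊕ β) (h1' : adjunctLE (β := β) a b (Sum.inl u) (Sum.inl a))
        (le_refl a : adjunctLE a b (Sum.inl a) (Sum.inr v)) with h | h
      · exact (Sum.inl.inj h).symm
      · exact absurd h (by simp)
    · rcases h3 (Sum.inr (⊥ : β)) (h1' : adjunctLE a b (Sum.inl u) (Sum.inr (⊥ : β)))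
        (bot_le : adjunctLE a b (Sum.inr (⊥ : β)) (Sum.inr v)) with h | h
      · exact absurd h (by simp)
      · exact (Sum.inr.inj h).symm
  · rintro ⟨h1, h2⟩
    rw [h1, h2]
    refine ⟨le_refl a, by simp, fun z hz1 hz2 => ?_⟩
    rcases z with w | w
    · have hw1 : a ≤ w := hz1
      have hw2 : w ≤ a := hz2
      exact Or.inl (congrArg Sum.inl (le_antisymm hw2 hw1))
    · have hw2 : w ≤ ⊥ := hz2
      exact Or.inr (congrArg Sum.inr (le_antisymm hw2 bot_le))

lemma adj_cov_rl (u : β) (v : α) :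
    RelCovBy (adjunctLE a b) (Sum.inr u : α ⊕ β) (Sum.inl v) ↔
      u = ⊤ ∧ v = b := by
  constructor
  · rintro ⟨h1, h2, h3⟩
    have h1' : b ≤ v := h1
    constructor
    · rcases h3 (Sum.inr ⊤) (le_top : adjunctLE a b (Sum.inr u) (Sum.inr (⊤ : β)))
        (h1' : adjunctLE a b (Sum.inr (⊤ : β)) (Sum.inl v)) with h | h
      · exact (Sum.inr.inj h).symm
      · exact absurd h (by simp)
    · rcases h3 (Sum.inl b : α ⊕ β) (le_refl b : adjunctLE a b (Sum.inr u) (Sum.inl b))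
        (h1' : adjunctLE (β := β) a b (Sum.inl b) (Sum.inl v)) with h | h
      · exact absurd h (by simp)
      · exact (Sum.inl.inj h).symm
  · rintro ⟨h1, h2⟩
    rw [h1, h2]
    refine ⟨le_refl b, by simp, fun z hz1 hz2 => ?_⟩
    rcases z with w | w
    · have hw1 : b ≤ w := hz1
      have hw2 : w ≤ b := hz2
      exact Or.inr (congrArg Sum.inl (le_antisymm hw2 hw1))
    · have hw1 : (⊤ : β) ≤ w := hz1
      exact Or.inl (congrArg Sum.inr (le_antisymm le_top hw1))

/-- Explicit bijection used to count the covering pairs of the adjunct. -/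
noncomputable def adjCovEquiv (hab : a < b) (hcov : ¬ a ⋖ b) :
    {p : (α ⊕ β) × (α ⊕ β) // RelCovBy (adjunctLE a b) p.1 p.2} ≃
      ({p : α × α // p.1 ⋖ p.2} ⊕ {p : β × β // p.1 ⋖ p.2} ⊕ Bool) where
  toFun := fun ⟨⟨x, y⟩, h⟩ =>
    match x, y, h with
    | Sum.inl u, Sum.inl v, h => Sum.inl ⟨(u, v), (adj_cov_ll hab hcov u v).mp h⟩
    | Sum.inr u, Sum.inr v, h => Sum.inr (Sum.inl ⟨(u, v), (adj_cov_rr hab u v).mp h⟩)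
    | Sum.inl _, Sum.inr _, _ => Sum.inr (Sum.inr false)
    | Sum.inr _, Sum.inl _, _ => Sum.inr (Sum.inr true)
  invFun := fun z =>
    match z with
    | Sum.inl ⟨(u, v), h⟩ =>
        ⟨(Sum.inl u, Sum.inl v), (adj_cov_ll hab hcov u v).mpr h⟩
    | Sum.inr (Sum.inl ⟨(u, v), h⟩) =>
        ⟨(Sum.inr u, Sum.inr v), (adj_cov_rr hab u v).mpr h⟩
    | Sum.inr (Sum.inr false) =>
        ⟨(Sum.inl a, Sum.inr ⊥), (adj_cov_lr a ⊥).mpr ⟨rfl, rfl⟩⟩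
    | Sum.inr (Sum.inr true) =>
        ⟨(Sum.inr ⊤, Sum.inl b), (adj_cov_rl ⊤ b).mpr ⟨rfl, rfl⟩⟩
  left_inv := by
    rintro ⟨⟨x | x, y | y⟩, h⟩
    · rfl
    · obtain ⟨rfl, rfl⟩ := (adj_cov_lr x y).mp h
      rfl
    · obtain ⟨rfl, rfl⟩ := (adj_cov_rl x y).mp h
      rfl
    · rfl
  right_inv := by
    rintro (⟨⟨u, v⟩, h⟩ | ⟨⟨u, v⟩, h⟩ | (_ | _)) <;> rfl

end AdjAux

/-- the covering pairs of the adjunct `L = L₁ ]ᵇₐ L₂` are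
exactly the covering pairs of `L₁`, the covering pairs of `L₂`, the pair
`(a, 0₂)` and the pair `(1₂, b)`; consequently
`|E(L)| = |E(L₁)| + |E(L₂)| + 2`. -/
theorem covers_of_adjunct {α β : Type*} [Lattice α] [Lattice β]
    [Finite α] [Finite β] [BoundedOrder β]
    {a b : α} (hab : a < b) (hcov : ¬ a ⋖ b) :
    (∀ x y : α ⊕ β, RelCovBy (adjunctLE a b) x y ↔
      ((∃ u v : α, x = Sum.inl u ∧ y = Sum.inl v ∧ u ⋖ v) ∨
       (∃ u v : β, x = Sum.inr u ∧ y = Sum.inr v ∧ u ⋖ v) ∨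
       (x = Sum.inl a ∧ y = Sum.inr (⊥ : β)) ∨
       (x = Sum.inr (⊤ : β) ∧ y = Sum.inl b))) ∧
    Nat.card {p : (α ⊕ β) × (α ⊕ β) // RelCovBy (adjunctLE a b) p.1 p.2} =
      Nat.card {p : α × α // p.1 ⋖ p.2} +
        Nat.card {p : β × β // p.1 ⋖ p.2} + 2 := by
  constructor
  · rintro (x | x) (y | y)
    · rw [adj_cov_ll hab hcov]
      constructor
      · intro h
        exact Or.inl ⟨x, y, rfl, rfl, h⟩
      · rintro (⟨u, v, hu, hv, h⟩ | ⟨u, v, hu, hv, h⟩ | ⟨hu, hv⟩ | ⟨hu, hv⟩) <;>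
          first
          | (obtain rfl := Sum.inl.inj hu; obtain rfl := Sum.inl.inj hv; exact h)
          | simp_all
    · rw [adj_cov_lr]
      constructor
      · rintro ⟨rfl, rfl⟩
        exact Or.inr (Or.inr (Or.inl ⟨rfl, rfl⟩))
      · rintro (⟨u, v, hu, hv, h⟩ | ⟨u, v, hu, hv, h⟩ | ⟨hu, hv⟩ | ⟨hu, hv⟩) <;>
          simp_all
    · rw [adj_cov_rl]
      constructor
      · rintro ⟨rfl, rfl⟩
        exact Or.inr (Or.inr (Or.inr ⟨rfl, rfl⟩))
      · rintro (⟨u, v, hu, hv, h⟩ | ⟨u, v, hu, hv, h⟩ | ⟨hu, hv⟩ | ⟨hu, hv⟩) <;>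
          simp_all
    · rw [adj_cov_rr hab]
      constructor
      · intro h
        exact Or.inr (Or.inl ⟨x, y, rfl, rfl, h⟩)
      · rintro (⟨u, v, hu, hv, h⟩ | ⟨u, v, hu, hv, h⟩ | ⟨hu, hv⟩ | ⟨hu, hv⟩) <;>
          first
          | (obtain rfl := Sum.inr.inj hu; obtain rfl := Sum.inr.inj hv; exact h)
          | simp_all
  · rw [Nat.card_congr (adjCovEquiv hab hcov), Nat.card_sum, Nat.card_sum,
      Nat.card_eq_fintype_card (α := Bool)]
    simp [add_assoc]
end
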